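/- Let n ≥ 1 and d ≥ 1, and let F : Fin n → Fin d → ℂ be a matrix satisfying Property A. Then F has a zero row: there exists i ∈ Fin n such that F i m = 0 for all m ∈ Fin d. -/
import Mathlib


open MvPolynomial in
/-- **Lemma (Property A implies a zero row).**
If `F : Fin n → Fin d → ℂ` (with `n, d ≥ 1`) satisfies Property A, i.e. for every
multiplicity vector `k : Fin d → ℕ` with `∑ m, k m = n`, the sum over all tuples
`j : Fin n → Fin d` whose fiber over each `m` has cardinality `k m` of the products
`∏ i, F i (j i)` vanishes, then `F` has a zero row. -/
theorem propertyA_implies_zero_row (n d : ℕ) (hn : 1 ≤ n) (hd : 1 ≤ d)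
    (F : Fin n → Fin d → ℂ)
    (hA : ∀ k : Fin d → ℕ, (∑ m, k m) = n →
      (∑ j ∈ Finset.univ.filter (fun j : Fin n → Fin d =>
          ∀ m : Fin d, (Finset.univ.filter (fun i : Fin n => j i = m)).card = k m),
        ∏ i, F i (j i)) = 0) :
    ∃ i : Fin n, ∀ m : Fin d, F i m = 0 := by
  classical
  have key : ∀ x : Fin d → ℂ, (∏ i, ∑ m, F i m * x m) = 0 := by
    intro x
    rw [Finset.prod_univ_sum]
    rw [Fintype.piFinset_univ]
    rw [← Finset.sum_fiberwise_of_maps_to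
      (g := fun j : Fin n → Fin d => fun m => (Finset.univ.filter fun i => j i = m).card)
      (t := Fintype.piFinset fun _ : Fin d => Finset.range (n+1))
      (fun j _ => by
        simp only [Fintype.mem_piFinset, Finset.mem_range]
        intro m
        exact Nat.lt_succ_of_le (le_trans (Finset.card_filter_le _ _) (by simp)))]
    apply Finset.sum_eq_zero
    intro k hk
    set S := ((Finset.univ : Finset (Fin n → Fin d)).filter
          (fun j => (fun m => (Finset.univ.filter fun i => j i = m).card) = k)) with hS
    rcases S.eq_empty_or_nonempty with he | ⟨j₀, hj₀⟩
    · rw [he, Finset.sum_empty]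
    · have hsum : (∑ m, k m) = n := by
        rw [hS] at hj₀
        simp only [Finset.mem_filter] at hj₀
        rw [← hj₀.2]
        simp only
        rw [← Finset.card_eq_sum_card_fiberwise (f := j₀) (t := Finset.univ) (fun i _ => Finset.mem_univ _)]
        simp
      have hstep : ∀ j ∈ S,
          (∏ i, F i (j i) * x (j i)) = (∏ m, x m ^ k m) * ∏ i, F i (j i) := by
        intro j hj
        rw [hS] at hj
        simp only [Finset.mem_filter] at hj
        rw [Finset.prod_mul_distrib, mul_comm]
        congr 1
        rw [← Finset.prod_fiberwise_of_maps_to (g := j) (t := Finset.univ) (fun i _ => Finset.mem_univ _)]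
        refine Finset.prod_congr rfl fun m _ => ?_
        rw [Finset.prod_congr rfl (fun i hi => by
          simp only [Finset.mem_filter] at hi; rw [hi.2]), Finset.prod_const]
        rw [← congrFun hj.2 m]
      rw [Finset.sum_congr rfl hstep, ← Finset.mul_sum]
      have : S =
          (Finset.univ.filter (fun j : Fin n → Fin d =>
            ∀ m : Fin d, (Finset.univ.filter (fun i : Fin n => j i = m)).card = k m)) := by
        rw [hS]
        apply Finset.filter_congr
        intro j _
        simp [_root_.funext_iff]
      rw [this, hA k hsum, mul_zero]
  set P : MvPolynomial (Fin d) ℂ := ∏ i, ∑ m, (C (F i m) * X m) with hP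
  have hP0 : P = 0 := by
    apply MvPolynomial.funext
    intro x
    simp only [hP, map_prod, map_sum, map_mul, eval_C, eval_X, map_zero]
    exact key x
  have := Finset.prod_eq_zero_iff.mp hP0
  obtain ⟨i, -, hi⟩ := this
  refine ⟨i, fun m => ?_⟩
  have h2 := congrArg (eval (Pi.single m 1 : Fin d → ℂ)) hi
  simp only [map_sum, map_mul, eval_C, eval_X, map_zero] at h2
  rw [Finset.sum_eq_single m (fun b _ hb => by simp [Pi.single_apply, hb])
    (by simp)] at h2
  simpa using h2
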